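/- arXiv:2006.05254 — 2 statements merged into one kernel-verified Lean document; each statement's English description precedes it below -/
import Mathlib

section
/- Let f : ℝ → ℝ be 1-Lipschitz, m_f-piecewise linear, and convex (or concave). Then there exists a GroupSort neural network of grouping size 2 satisfying Assumption 1 that represents f exactly, with depth ⌈log₂(m_f)⌉ + 1 and size at most 3m_f − 1. -/
open Matrix

/-- A GroupSort feedforward neural network with grouping size `k`, input dimension `d`
and real output.  `depth` is the number of affine layers (`q` in the paper), so there are
`depth - 1` hidden layers of widths `width 1, …, width (depth - 1)` (each divisible by `k`),
with `width 0 = d` (input) and `width depth = 1` (output). -/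
structure GroupSortNet (k d : ℕ) where
  depth : ℕ
  depth_pos : 1 ≤ depth
  width : ℕ → ℕ
  width_in : width 0 = d
  width_out : width depth = 1
  width_div : ∀ i, 1 ≤ i → i ≤ depth - 1 → k ∣ width i
  V : (i : ℕ) → Matrix (Fin (width (i + 1))) (Fin (width i)) ℝ
  c : (i : ℕ) → Fin (width (i + 1)) → ℝ

/-- The GroupSort activation with grouping size `k`: the coordinates are split into
consecutive groups of `k` elements and each group is sorted in decreasing order. -/
noncomputable def groupSortFun (k : ℕ) {ν : ℕ} (x : Fin ν → ℝ) : Fin ν → ℝ := fun i =>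
  if hk : 0 < k then
    let grp : Fin k → ℝ := fun j =>
      if h : ((i : ℕ) / k) * k + (j : ℕ) < ν then x ⟨((i : ℕ) / k) * k + (j : ℕ), h⟩ else 0
    (grp ∘ Tuple.sort grp)
      ⟨k - 1 - (i : ℕ) % k, lt_of_le_of_lt (Nat.sub_le _ _) (Nat.sub_lt hk Nat.one_pos)⟩
  else x i

/-- Output of the hidden layers: `post x i` is the (activated) output of layer `i`. -/
noncomputable def GroupSortNet.post {k d : ℕ} (N : GroupSortNet k d) (x : Fin d → ℝ) :
    (i : ℕ) → Fin (N.width i) → ℝ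
  | 0 => fun j => x (Fin.cast N.width_in j)
  | i + 1 => groupSortFun k (N.V i *ᵥ N.post x i + N.c i)

/-- The real-valued function computed by the network (no activation after the last
affine layer). -/
noncomputable def GroupSortNet.eval {k d : ℕ} (N : GroupSortNet k d) (x : Fin d → ℝ) : ℝ :=
  (N.V (N.depth - 1) *ᵥ N.post x (N.depth - 1) + N.c (N.depth - 1))
    ⟨0, by
      have h : N.depth - 1 + 1 = N.depth := Nat.succ_pred_eq_of_pos N.depth_pos
      rw [h, N.width_out]
      exact Nat.one_pos⟩

/-- The size of the network: the sum of the widths of the hidden layers. -/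
def GroupSortNet.size {k d : ℕ} (N : GroupSortNet k d) : ℕ :=
  ∑ i ∈ Finset.Icc 1 (N.depth - 1), N.width i

/-- Assumption 1: `‖V₁‖_{2,∞} ≤ 1` (every row of `V₁` has Euclidean norm at most `1`),
`‖V_i‖_∞ ≤ 1` for `i = 2, …, q` (every row has `ℓ¹`-norm at most `1`), and all offsets
are bounded by some constant `K₂ ≥ 0`. -/
def GroupSortNet.Assumption1 {k d : ℕ} (N : GroupSortNet k d) : Prop :=
  (∀ r, ∑ j, (N.V 0 r j) ^ 2 ≤ 1) ∧
  (∀ i, 1 ≤ i → i < N.depth → ∀ r, ∑ j, |N.V i r j| ≤ 1) ∧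
  (∃ K₂ : ℝ, 0 ≤ K₂ ∧ ∀ i, i < N.depth → ∀ r, |N.c i r| ≤ K₂)

/-- A (possibly unbounded, possibly partly open) polyhedral set: a finite intersection of
(strict or non-strict) affine half-spaces. -/
def IsPolyhedralSet {d : ℕ} (S : Set (Fin d → ℝ)) : Prop :=
  ∃ (n : ℕ) (a : Fin n → Fin d → ℝ) (b : Fin n → ℝ) (strict : Fin n → Bool),
    S = {x | ∀ i, if strict i then ∑ j, a i j * x j < b i else ∑ j, a i j * x j ≤ b i}

/-- `f` is a continuous `m`-piecewise linear function on `ℝ^d` with pieces `Ω` and affine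
functions `x ↦ ⟨a i, x⟩ + b i`. -/
def IsPWLWith {d : ℕ} (f : (Fin d → ℝ) → ℝ) (m : ℕ)
    (Ω : Fin m → Set (Fin d → ℝ)) (a : Fin m → Fin d → ℝ) (b : Fin m → ℝ) : Prop :=
  Continuous f ∧
  (∀ i, IsPolyhedralSet (Ω i)) ∧
  (∀ i j, i ≠ j → Disjoint (Ω i) (Ω j)) ∧
  (⋃ i, Ω i) = Set.univ ∧
  (∀ i, ∀ x ∈ Ω i, f x = ∑ j, a i j * x j + b i)

/-- There is a partition of `ℝ^d` into `M` polyhedral sets, refining the partition `Ω`,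
on each of which no difference `ℓ_i - ℓ_j` of two affine pieces changes sign. -/
def IsSignRefinement {d : ℕ} (m : ℕ) (Ω : Fin m → Set (Fin d → ℝ))
    (a : Fin m → Fin d → ℝ) (b : Fin m → ℝ) (M : ℕ) : Prop :=
  ∃ Ω' : Fin M → Set (Fin d → ℝ),
    (∀ p, IsPolyhedralSet (Ω' p)) ∧
    (∀ p q, p ≠ q → Disjoint (Ω' p) (Ω' q)) ∧
    (⋃ p, Ω' p) = Set.univ ∧
    (∀ p, ∃ i, Ω' p ⊆ Ω i) ∧
    (∀ p : Fin M, ∀ i j : Fin m,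
      (∀ x ∈ Ω' p, ∑ t, a i t * x t + b i ≤ ∑ t, a j t * x t + b j) ∨
      (∀ x ∈ Ω' p, ∑ t, a j t * x t + b j ≤ ∑ t, a i t * x t + b i))

/-- `f : ℝ → ℝ` is a continuous `m`-piecewise linear function: `ℝ` is partitioned into
`m` intervals on the `i`-th of which `f x = a i * x + b i`. -/
def IsPWLRealWith (f : ℝ → ℝ) (m : ℕ) (I : Fin m → Set ℝ) (a b : Fin m → ℝ) : Prop :=
  Continuous f ∧
  (∀ i, (I i).OrdConnected) ∧
  (∀ i j, i ≠ j → Disjoint (I i) (I j)) ∧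
  (⋃ i, I i) = Set.univ ∧
  (∀ i, ∀ x ∈ I i, f x = a i * x + b i)

def IsPWLReal (f : ℝ → ℝ) (m : ℕ) : Prop :=
  ∃ I a b, IsPWLRealWith f m I a b

lemma continuous_finset_sup' {ι : Type*} (s : Finset ι) (hs : s.Nonempty) (F : ι → ℝ → ℝ)
    (hF : ∀ i, Continuous (F i)) : Continuous (fun x => s.sup' hs (fun i => F i x)) := by
  induction hs using Finset.Nonempty.cons_induction with
  | singleton a =>
      have : (fun x => ({a} : Finset ι).sup' (Finset.singleton_nonempty a) (fun i => F i x)) = F a := by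
        funext x; simp
      rw [this]; exact hF a
  | cons a s ha hne ihs =>
      have : (fun x => (Finset.cons a s ha).sup' (Finset.cons_nonempty ha) (fun i => F i x))
          = fun x => max (F a x) (s.sup' hne (fun i => F i x)) := by
        funext x; rw [Finset.sup'_cons hne]
      rw [this]; exact (hF a).max ihs

lemma line_le_of_convex (f : ℝ → ℝ) (hconv : ConvexOn ℝ Set.univ f) (a b u v : ℝ)
    (huv : u < v) (hu : f u = a*u+b) (hv : f v = a*v+b)
    (hmid : ∀ y ∈ Set.Icc u v, f y = a*y+b) :
    ∀ x, a*x+b ≤ f x := by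
  intro x
  rcases lt_trichotomy x u with hx | hx | hx
  · set θ : ℝ := (v - u)/(v - x) with hθ
    have hvx : (0:ℝ) < v - x := by linarith
    have hθ0 : 0 < θ := div_pos (by linarith) hvx
    have hθ1 : θ ≤ 1 := (div_le_one hvx).2 (by linarith)
    have hmul : θ * (v - x) = v - u := div_mul_cancel₀ _ (by linarith)
    have hcomb : θ * x + (1-θ) * v = u := by nlinarith [hmul]
    have hcv := hconv.2 (Set.mem_univ x) (Set.mem_univ v) hθ0.le
      (by linarith : (0:ℝ) ≤ 1 - θ) (by ring)
    simp only [smul_eq_mul, hcomb] at hcv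
    rw [hu, hv] at hcv
    have h2 : a * (θ*x + (1-θ)*v) = a * u := by rw [hcomb]
    have key : θ * (a*x+b) ≤ θ * f x := by nlinarith [hcv, h2]
    exact le_of_mul_le_mul_left key hθ0
  · subst hx; rw [hu]
  · rcases le_or_gt x v with hxv | hxv
    · rw [hmid x ⟨hx.le, hxv⟩]
    · set θ : ℝ := (v - u)/(x - u) with hθ
      have hxu : (0:ℝ) < x - u := by linarith
      have hθ0 : 0 < θ := div_pos (by linarith) hxu
      have hθ1 : θ ≤ 1 := (div_le_one hxu).2 (by linarith)
      have hmul : θ * (x - u) = v - u := div_mul_cancel₀ _ (by linarith)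
      have hcomb : (1-θ) * u + θ * x = v := by nlinarith [hmul]
      have hcv := hconv.2 (Set.mem_univ u) (Set.mem_univ x)
        (by linarith : (0:ℝ) ≤ 1 - θ) hθ0.le (by ring)
      simp only [smul_eq_mul, hcomb] at hcv
      rw [hu, hv] at hcv
      have h2 : a * ((1-θ)*u + θ*x) = a * v := by rw [hcomb]
      have key : θ * (a*x+b) ≤ θ * f x := by nlinarith [hcv, h2]
      exact le_of_mul_le_mul_left key hθ0

lemma repr_convex (f : ℝ → ℝ) (hlip : LipschitzWith 1 f) (m : ℕ) (hm : 2 ≤ m)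
    (hne : (Finset.univ : Finset (Fin m)).Nonempty)
    (hf : IsPWLReal f m) (hconv : ConvexOn ℝ Set.univ f) :
    ∃ α β : Fin m → ℝ, (∀ t, |α t| ≤ 1) ∧
      ∀ x, f x = Finset.univ.sup' hne (fun t => α t * x + β t) := by
  classical
  obtain ⟨I, a, b, hcont, hord, hdisj, hcover, heq⟩ := hf
  set S : Finset (Fin m) := Finset.univ.filter (fun i => ∃ u ∈ I i, ∃ v ∈ I i, u < v) with hSdef
  have hsub : ∀ i, i ∉ S → (I i).Subsingleton := by
    intro i hi u hu v hv
    by_contra hne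
    rcases Ne.lt_or_gt hne with h | h
    · exact hi (Finset.mem_filter.2 ⟨Finset.mem_univ _, u, hu, v, hv, h⟩)
    · exact hi (Finset.mem_filter.2 ⟨Finset.mem_univ _, v, hv, u, hu, h⟩)
  have hS : S.Nonempty := by
    by_contra hS
    rw [Finset.not_nonempty_iff_eq_empty] at hS
    have hfin : (Set.univ : Set ℝ).Finite := by
      rw [← hcover]
      exact Set.finite_iUnion (fun i => (hsub i (by simp [hS])).finite)
    exact Set.infinite_univ hfin
  obtain ⟨i₀, hi₀⟩ := hS
  -- key facts for i ∈ S
  have key : ∀ i ∈ S, (∀ x, a i * x + b i ≤ f x) ∧ |a i| ≤ 1 := by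
    intro i hi
    obtain ⟨-, u, hu, v, hv, huv⟩ := Finset.mem_filter.1 hi
    have hmid : ∀ y ∈ Set.Icc u v, f y = a i * y + b i := by
      intro y hy
      exact heq i y ((hord i).out hu hv hy)
    have hfu : f u = a i * u + b i := heq i u hu
    have hfv : f v = a i * v + b i := heq i v hv
    constructor
    · exact line_le_of_convex f hconv (a i) (b i) u v huv hfu hfv hmid
    · have hd := hlip.dist_le_mul u v
      rw [Real.dist_eq, Real.dist_eq] at hd
      have : |a i| * |u - v| ≤ 1 * |u - v| := by
        calc |a i| * |u - v| = |a i * u + b i - (a i * v + b i)| := by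
              rw [← abs_mul]; ring_nf
            _ = |f u - f v| := by rw [hfu, hfv]
            _ ≤ 1 * |u - v| := by simpa using hd
      exact le_of_mul_le_mul_right this (by rw [abs_sub_comm]; rw [abs_of_pos]; linarith; linarith)
  set α : Fin m → ℝ := fun t => if t ∈ S then a t else a i₀ with hα
  set β : Fin m → ℝ := fun t => if t ∈ S then b t else b i₀ with hβ
  have hline_le : ∀ t, ∀ x, α t * x + β t ≤ f x := by
    intro t x
    simp only [hα, hβ]
    by_cases ht : t ∈ S
    · simp only [if_pos ht]; exact (key t ht).1 x
    · simp only [if_neg ht]; exact (key i₀ hi₀).1 x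
  refine ⟨α, β, ?_, ?_⟩
  · intro t
    simp only [hα]
    by_cases ht : t ∈ S
    · simp only [if_pos ht]; exact (key t ht).2
    · simp only [if_neg ht]; exact (key i₀ hi₀).2
  · have hgf : (fun x => Finset.univ.sup' hne (fun t => α t * x + β t)) = f := by
      have hgcont : Continuous (fun x => Finset.univ.sup' hne (fun t => α t * x + β t)) :=
        continuous_finset_sup' _ hne (fun t x => α t * x + β t)
          (fun t => (continuous_const.mul continuous_id).add continuous_const)
    -- dense set where they agree
      set F : Set ℝ := ⋃ i ∈ (Sᶜ : Finset (Fin m)), I i with hF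
      have hFfin : F.Finite :=
        Set.Finite.biUnion (Finset.finite_toSet _)
          (fun i hi => (hsub i (by simpa using hi)).finite)
      apply Continuous.ext_on (hFfin.countable.dense_compl ℝ) hgcont hcont
      intro x hx
      have hxI : ∃ i ∈ S, x ∈ I i := by
        have : x ∈ ⋃ i, I i := by rw [hcover]; trivial
        obtain ⟨i, hi⟩ := Set.mem_iUnion.1 this
        refine ⟨i, ?_, hi⟩
        by_contra hiS
        exact hx (Set.mem_biUnion (Finset.mem_coe.2 (Finset.mem_compl.2 hiS)) hi)
      obtain ⟨i, hiS, hxi⟩ := hxI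
      show Finset.univ.sup' hne (fun t => α t * x + β t) = f x
      have hle : Finset.univ.sup' hne (fun t => α t * x + β t) ≤ f x :=
        Finset.sup'_le _ _ (fun t _ => hline_le t x)
      have hge : f x ≤ Finset.univ.sup' hne (fun t => α t * x + β t) := by
        have hfx : f x = α i * x + β i := by
          simp only [hα, hβ, if_pos hiS]; exact heq i x hxi
        rw [hfx]
        exact Finset.le_sup' (fun t => α t * x + β t) (Finset.mem_univ i)
      exact le_antisymm hle hge
    intro x
    exact (congrFun hgf x).symm


section NetHelpers

lemma sort_two_max (g : Fin 2 → ℝ) : (g ∘ Tuple.sort g) 1 = max (g 0) (g 1) := by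
  have hmono := Tuple.monotone_sort g
  set σ := Tuple.sort g with hσ
  have h01 : (g ∘ σ) 0 ≤ (g ∘ σ) 1 := hmono (by decide)
  have hne := σ.injective.ne (show (0:Fin 2) ≠ 1 by decide)
  have hv : σ 0 = 0 ∨ σ 0 = 1 := by omega
  rcases hv with h | h
  · have h1 : σ 1 = 1 := by rw [h] at hne; omega
    simp only [Function.comp_apply, h, h1] at *
    rw [max_eq_right h01]
  · have h1 : σ 1 = 0 := by rw [h] at hne; omega
    simp only [Function.comp_apply, h, h1] at *
    rw [max_eq_left h01]

lemma groupSortFun_two_even {ν : ℕ} (y : Fin ν → ℝ) (r : ℕ) (h2r : 2*r < ν) (h : 2*r+1 < ν) :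
    groupSortFun 2 y ⟨2*r, h2r⟩ = max (y ⟨2*r, h2r⟩) (y ⟨2*r+1, h⟩) := by
  have hdiv : (2*r)/2 = r := by omega
  have hmod : (2*r)%2 = 0 := by omega
  unfold groupSortFun
  rw [dif_pos (by norm_num : (0:ℕ) < 2)]
  simp only [hdiv, hmod]
  set G : Fin 2 → ℝ := fun j =>
      if hj : r * 2 + (j : ℕ) < ν then y ⟨r * 2 + (j : ℕ), hj⟩ else 0 with hG
  have hG0 : G 0 = y ⟨2*r, h2r⟩ := by
    simp only [hG, Fin.val_zero, Fin.val_one]; rw [dif_pos (by omega : r*2 + 0 < ν)]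
    congr 1; simp; omega
  have hG1 : G 1 = y ⟨2*r+1, h⟩ := by
    simp only [hG, Fin.val_zero, Fin.val_one]; rw [dif_pos (by omega : r*2 + 1 < ν)]
    congr 1; simp; omega
  have := sort_two_max G
  rw [hG0, hG1] at this
  convert this using 2
  rfl

end NetHelpers

namespace PWLNet

/-- number of levels -/
def L (m : ℕ) : ℕ := Nat.clog 2 m
/-- number of values at level `i` -/
def n (m i : ℕ) : ℕ := (m-1)/2^i + 1
/-- widths -/
def w (m i : ℕ) : ℕ := if i = 0 then 1 else if i ≤ L m then 2 * n m i else 1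

lemma n0 (m : ℕ) (hm : 1 ≤ m) : n m 0 = m := by simp [n]; omega

lemma n_pos (m i : ℕ) : 1 ≤ n m i := by simp [n]

lemma n_succ (m i : ℕ) : n m (i+1) = (n m i - 1)/2 + 1 := by
  simp [n, pow_succ, Nat.div_div_eq_div_mul]

lemma nL (m : ℕ) (hm : 1 ≤ m) : n m (L m) = 1 := by
  have h := Nat.le_pow_clog (by norm_num : 1 < 2) m
  have : (m-1)/2^(L m) = 0 := Nat.div_eq_of_lt (by unfold L; omega)
  simp [n, this]

lemma m_le_n_mul (m i : ℕ) : m ≤ n m i * 2^i := by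
  have h2 : 0 < 2^i := Nat.pow_pos (by norm_num)
  have : (m-1)/2^i < n m i := by simp [n]
  have := (Nat.div_lt_iff_lt_mul h2).1 this
  omega

lemma w0 (m : ℕ) : w m 0 = 1 := rfl

lemma w_eq (m i : ℕ) (h1 : 1 ≤ i) (h2 : i ≤ L m) : w m i = 2 * n m i := by
  unfold w; rw [if_neg (by omega), if_pos h2]

lemma w_out (m i : ℕ) (h : L m < i) : w m i = 1 := by
  simp only [w, if_neg (by omega : ¬ i = 0), if_neg (by omega : ¬ i ≤ L m)]

/-- extended line coefficients -/
def aN (m : ℕ) (α : Fin m → ℝ) (j : ℕ) : ℝ :=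
  if h : min j (m-1) < m then α ⟨min j (m-1), h⟩ else 0

/-- the weight matrices -/
def Vdef (m : ℕ) (α : Fin m → ℝ) (ε : ℝ) (i : ℕ) :
    Matrix (Fin (w m (i+1))) (Fin (w m i)) ℝ :=
  fun j c =>
    if i = 0 then aN m α j.val
    else if i = L m then (if (c : ℕ) = 0 then ε else 0)
    else if (c : ℕ) = 2 * min (j : ℕ) (n m i - 1) then 1 else 0

/-- the offsets -/
def cdef (m : ℕ) (β : Fin m → ℝ) (i : ℕ) : Fin (w m (i+1)) → ℝ :=
  fun j => if i = 0 then aN m β j.val else 0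

def theNet (m : ℕ) (hm : 2 ≤ m) (α β : Fin m → ℝ) (ε : ℝ) : GroupSortNet 2 1 where
  depth := L m + 1
  depth_pos := by omega
  width := w m
  width_in := rfl
  width_out := w_out m (L m + 1) (by omega)
  width_div := by
    intro i h1 h2
    rw [w_eq m i h1 (by omega)]
    exact Dvd.intro _ rfl
  V := Vdef m α ε
  c := cdef m β

/-- blocks of line indices -/
def blk (m i r : ℕ) : Finset (Fin m) :=
  Finset.univ.filter (fun t => r * 2^i ≤ (t : ℕ) ∧ (t : ℕ) < (r+1) * 2^i)

noncomputable def B (m : ℕ) (ℓ : Fin m → ℝ) (i r : ℕ) : WithBot ℝ :=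
  (blk m i r).sup (fun t => (ℓ t : WithBot ℝ))

lemma blk_union (m i r : ℕ) : blk m (i+1) r = blk m i (2*r) ∪ blk m i (2*r+1) := by
  have e1 : r * 2^(i+1) = 2*(r*2^i) := by ring
  have e2 : (r+1) * 2^(i+1) = 2*(r*2^i) + 2*2^i := by ring
  have e3 : (2*r) * 2^i = 2*(r*2^i) := by ring
  have e4 : (2*r+1) * 2^i = 2*(r*2^i) + 2^i := by ring
  have e5 : (2*r+1+1) * 2^i = 2*(r*2^i) + 2*2^i := by ring
  ext t
  simp only [blk, Finset.mem_filter, Finset.mem_union, Finset.mem_univ, true_and,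
    e1, e2, e3, e4, e5]
  omega

lemma blk_empty (m i r : ℕ) (h : n m i ≤ r) : blk m i r = ∅ := by
  have h2 : 0 < 2^i := Nat.pow_pos (by norm_num)
  have hmn := m_le_n_mul m i
  have : n m i * 2^i ≤ r * 2^i := Nat.mul_le_mul_right _ h
  ext t
  simp only [blk, Finset.mem_filter, Finset.mem_univ, true_and, Finset.notMem_empty,
    iff_false]
  have ht := t.2
  omega

lemma blk_nonempty (m i r : ℕ) (hm : 1 ≤ m) (h : r < n m i) : (blk m i r).Nonempty := by
  have h2 : 0 < 2^i := Nat.pow_pos (by norm_num)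
  have hr : r ≤ (m-1)/2^i := by simp [n] at h; omega
  have hle : r * 2^i ≤ m - 1 := (Nat.le_div_iff_mul_le h2).1 hr
  have e : (r+1) * 2^i = r * 2^i + 2^i := by ring
  refine ⟨⟨r * 2^i, by omega⟩, ?_⟩
  simp only [blk, Finset.mem_filter, Finset.mem_univ, true_and]
  omega

lemma B_combine (m : ℕ) (ℓ : Fin m → ℝ) (i r : ℕ) :
    B m ℓ (i+1) r = B m ℓ i (2*r) ⊔ B m ℓ i (2*r+1) := by
  simp [B, blk_union, Finset.sup_union]

lemma B_coe (m : ℕ) (ℓ : Fin m → ℝ) (i r : ℕ) (hm : 1 ≤ m) (h : r < n m i) :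
    B m ℓ i r = ((blk m i r).sup' (blk_nonempty m i r hm h) ℓ : ℝ) := by
  rw [B, Finset.coe_sup']
  rfl

end PWLNet


namespace PWLNet

lemma L_pos (m : ℕ) (hm : 2 ≤ m) : 1 ≤ L m := by
  have : 0 < Nat.clog 2 m := Nat.clog_pos (by norm_num) hm
  unfold L; omega

lemma B_zero (m : ℕ) (ℓ : Fin m → ℝ) (s : ℕ) (hs : s < m) :
    B m ℓ 0 s = (ℓ ⟨s, hs⟩ : WithBot ℝ) := by
  have hb : blk m 0 s = {⟨s, hs⟩} := by
    ext t
    simp only [blk, Finset.mem_filter, Finset.mem_univ, true_and, Finset.mem_singleton,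
      pow_zero, mul_one]
    constructor
    · intro h
      apply Fin.ext
      show (t:ℕ) = s
      omega
    · intro h
      rw [h]
      exact ⟨le_refl s, Nat.lt_succ_self s⟩
  simp [B, hb]

lemma B_clamp (m : ℕ) (ℓ : Fin m → ℝ) (i r : ℕ) (hr : r < n m (i+1)) :
    B m ℓ i (min (2*r) (n m i - 1)) ⊔ B m ℓ i (min (2*r+1) (n m i - 1))
      = B m ℓ (i+1) r := by
  have hns := n_succ m i
  have hnp := n_pos m i
  have h2r : 2*r ≤ n m i - 1 := by omega
  rw [min_eq_left h2r]
  rcases le_or_gt (2*r+1) (n m i - 1) with h | h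
  · rw [min_eq_left h, B_combine]
  · have hmin : min (2*r+1) (n m i - 1) = 2*r := by omega
    rw [hmin, B_combine]
    rw [show B m ℓ i (2*r+1) = ⊥ from by
      rw [B, blk_empty m i (2*r+1) (by omega), Finset.sup_empty]]
    simp

lemma sum_ite_coeff {N : ℕ} (K : ℕ) (hK : K < N) (e : ℝ) (v : Fin N → ℝ) :
    ∑ c : Fin N, (if (c:ℕ) = K then e else 0) * v c = e * v ⟨K, hK⟩ := by
  rw [Finset.sum_eq_single (⟨K, hK⟩ : Fin N)]
  · simp
  · intro b _ hb
    rw [if_neg, zero_mul]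
    intro hc; exact hb (Fin.ext hc)
  · intro h; exact absurd (Finset.mem_univ _) h

lemma sum_fin_one {N : ℕ} (hN : N = 1) (v : Fin N → ℝ) :
    ∑ c : Fin N, v c = v ⟨0, by omega⟩ := by
  subst hN
  rw [Fin.sum_univ_one]
  rfl

lemma post_invariant (m : ℕ) (hm : 2 ≤ m) (α β : Fin m → ℝ) (ε : ℝ) (x : ℝ) :
    ∀ i, 1 ≤ i → i ≤ L m → ∀ r, r < n m i → ∀ (h2r : 2*r < w m i),
      (((theNet m hm α β ε).post (fun _ => x) i) ⟨2*r, h2r⟩ : WithBot ℝ)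
        = B m (fun t => α t * x + β t) i r := by
  set ℓ : Fin m → ℝ := fun t => α t * x + β t with hℓ
  intro i
  induction i with
  | zero => omega
  | succ i ih =>
    intro _ hiL r hr h2r
    have hw1 : w m (i+1) = 2 * n m (i+1) := w_eq m (i+1) (by omega) hiL
    have hodd : 2*r+1 < w m (i+1) := by omega
    have hpost : (theNet m hm α β ε).post (fun _ => x) (i+1)
        = groupSortFun 2 ((Vdef m α ε i) *ᵥ (theNet m hm α β ε).post (fun _ => x) i
            + cdef m β i) := rfl
    set y : Fin (w m (i+1)) → ℝ :=
      (Vdef m α ε i) *ᵥ (theNet m hm α β ε).post (fun _ => x) i + cdef m β i with hy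
    rw [hpost]; erw [groupSortFun_two_even y r h2r hodd]
    rcases Nat.eq_zero_or_pos i with hi0 | hip
    · -- base case : first layer
      subst hi0
      have hyj : ∀ (j : ℕ) (hj : j < w m 1),
          y ⟨j, hj⟩ = ℓ ⟨min j (m-1), by omega⟩ := by
        intro j hj
        rw [hy]
        show (∑ c : Fin (w m 0), Vdef m α ε 0 ⟨j, hj⟩ c
            * (theNet m hm α β ε).post (fun _ => x) 0 c) + cdef m β 0 ⟨j, hj⟩ = _
        have hpost0 : ∀ c : Fin (w m 0),
            (theNet m hm α β ε).post (fun _ => x) 0 c = x := fun c => rfl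
        have hV0 : ∀ c : Fin (w m 0), Vdef m α ε 0 ⟨j, hj⟩ c = aN m α j := by
          intro c; simp [Vdef]
        have hc0 : cdef m β 0 ⟨j, hj⟩ = aN m β j := by simp [cdef]
        calc (∑ c : Fin (w m 0), Vdef m α ε 0 ⟨j, hj⟩ c
              * (theNet m hm α β ε).post (fun _ => x) 0 c) + cdef m β 0 ⟨j, hj⟩
            = (∑ _c : Fin (w m 0), aN m α j * x) + aN m β j := by
              rw [hc0]
              refine congrArg (fun z => z + aN m β j) (Finset.sum_congr rfl ?_)
              intro c _; rw [hV0 c, hpost0 c]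
          _ = aN m α j * x + aN m β j := by
              rw [sum_fin_one (w0 m) (fun _ => aN m α j * x)]
          _ = ℓ ⟨min j (m-1), by omega⟩ := by
              rw [hℓ]
              simp only [aN, dif_pos (show min j (m-1) < m by omega)]
      rw [hyj (2*r) h2r, hyj (2*r+1) hodd]
      rw [show ((max (ℓ ⟨min (2*r) (m-1), by omega⟩) (ℓ ⟨min (2*r+1) (m-1), by omega⟩) : ℝ)
          : WithBot ℝ)
        = ((ℓ ⟨min (2*r) (m-1), by omega⟩ : ℝ) : WithBot ℝ)
          ⊔ ((ℓ ⟨min (2*r+1) (m-1), by omega⟩ : ℝ) : WithBot ℝ) from by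
          rw [← WithBot.coe_sup]]
      rw [← B_zero m ℓ (min (2*r) (m-1)) (by omega),
          ← B_zero m ℓ (min (2*r+1) (m-1)) (by omega)]
      have hn0 : n m 0 - 1 = m - 1 := by rw [n0 m (by omega)]
      rw [← hn0]
      exact B_clamp m ℓ 0 r hr
    · -- inductive step : middle layer
      have hwi : w m i = 2 * n m i := w_eq m i hip (by omega)
      have hiLlt : i < L m := by omega
      have hyj : ∀ (j : ℕ) (hj : j < w m (i+1)),
          (y ⟨j, hj⟩ : WithBot ℝ) = B m ℓ i (min j (n m i - 1)) := by
        intro j hj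
        have hKlt : 2 * min j (n m i - 1) < w m i := by
          have := n_pos m i; omega
        have hV : ∀ c : Fin (w m i), Vdef m α ε i ⟨j, hj⟩ c
            = (if (c:ℕ) = 2 * min j (n m i - 1) then 1 else 0) := by
          intro c
          simp only [Vdef, if_neg (show ¬ i = 0 by omega), if_neg (show ¬ i = L m by omega)]
        have hyval : y ⟨j, hj⟩ = (theNet m hm α β ε).post (fun _ => x) i
            ⟨2 * min j (n m i - 1), hKlt⟩ := by
          rw [hy]
          show (∑ c : Fin (w m i), Vdef m α ε i ⟨j, hj⟩ c
              * (theNet m hm α β ε).post (fun _ => x) i c) + cdef m β i ⟨j, hj⟩ = _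
          rw [show cdef m β i ⟨j, hj⟩ = 0 from by simp [cdef]; omega]
          rw [show (∑ c : Fin (w m i), Vdef m α ε i ⟨j, hj⟩ c
              * (theNet m hm α β ε).post (fun _ => x) i c)
            = ∑ c : Fin (w m i), (if (c:ℕ) = 2 * min j (n m i - 1) then (1:ℝ) else 0)
              * (theNet m hm α β ε).post (fun _ => x) i c from by
              apply Finset.sum_congr rfl; intro c _; rw [hV c]]
          erw [sum_ite_coeff (2 * min j (n m i - 1)) hKlt 1]
          rw [one_mul, add_zero]
          rfl
        rw [hyval]
        exact ih hip (by omega) (min j (n m i - 1)) (by have := n_pos m i; omega) hKlt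
      rw [show ((max (y ⟨2*r, h2r⟩) (y ⟨2*r+1, hodd⟩) : ℝ) : WithBot ℝ)
          = ((y ⟨2*r, h2r⟩ : ℝ) : WithBot ℝ) ⊔ ((y ⟨2*r+1, hodd⟩ : ℝ) : WithBot ℝ) from by
          rw [← WithBot.coe_sup]]
      rw [hyj (2*r) h2r, hyj (2*r+1) hodd]
      exact B_clamp m ℓ i r hr

end PWLNet


namespace PWLNet

lemma blk_top (m : ℕ) : blk m (L m) 0 = Finset.univ := by
  ext t
  simp only [blk, Finset.mem_filter, Finset.mem_univ, true_and, iff_true]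
  have h1 : m ≤ 2^(L m) := Nat.le_pow_clog (by norm_num) m
  have h2 : (0:ℕ) * 2^(L m) = 0 := by ring
  have h3 : (0+1) * 2^(L m) = 2^(L m) := by ring
  have ht := t.2
  omega

lemma theNet_eval (m : ℕ) (hm : 2 ≤ m) (hne : (Finset.univ : Finset (Fin m)).Nonempty)
    (α β : Fin m → ℝ) (ε : ℝ) (x : ℝ) :
    (theNet m hm α β ε).eval (fun _ => x)
      = ε * Finset.univ.sup' hne (fun t => α t * x + β t) := by
  set ℓ : Fin m → ℝ := fun t => α t * x + β t with hℓ
  have hL1 := L_pos m hm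
  have hwL : w m (L m) = 2 * n m (L m) := w_eq m (L m) hL1 le_rfl
  have hnL1 : n m (L m) = 1 := nL m (by omega)
  have hn1 := n_pos m (L m)
  have h0w : (0:ℕ) < w m (L m) := by omega
  have h0out : (0:ℕ) < w m (L m + 1) := by
    rw [w_out m (L m + 1) (by omega)]; omega
  have heval : (theNet m hm α β ε).eval (fun _ => x)
      = (Vdef m α ε (L m) *ᵥ (theNet m hm α β ε).post (fun _ => x) (L m)
          + cdef m β (L m)) ⟨0, h0out⟩ := rfl
  rw [heval]
  have hVL : ∀ c : Fin (w m (L m)), Vdef m α ε (L m) ⟨0, h0out⟩ c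
      = (if (c:ℕ) = 0 then ε else 0) := by
    intro c
    have hL0 : ¬ L m = 0 := by omega
    simp [Vdef, hL0]
  have hcL : cdef m β (L m) ⟨0, h0out⟩ = 0 := by
    simp only [cdef, if_neg (show ¬ L m = 0 by omega)]
  show (∑ c : Fin (w m (L m)), Vdef m α ε (L m) ⟨0, h0out⟩ c
      * (theNet m hm α β ε).post (fun _ => x) (L m) c) + cdef m β (L m) ⟨0, h0out⟩ = _
  rw [hcL, add_zero]
  rw [show (∑ c : Fin (w m (L m)), Vdef m α ε (L m) ⟨0, h0out⟩ c
        * (theNet m hm α β ε).post (fun _ => x) (L m) c)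
      = ∑ c : Fin (w m (L m)), (if (c:ℕ) = 0 then ε else 0)
        * (theNet m hm α β ε).post (fun _ => x) (L m) c from
    Finset.sum_congr rfl (fun c _ => by rw [hVL c])]
  erw [sum_ite_coeff 0 h0w ε]
  congr 1
  -- the max-of-all value
  have hr0 : 0 < n m (L m) := hn1
  have h2r0 : 2*0 < w m (L m) := by omega
  have hinv := post_invariant m hm α β ε x (L m) hL1 le_rfl 0 hr0 h2r0
  have hB : B m ℓ (L m) 0 = ((Finset.univ.sup' hne ℓ : ℝ) : WithBot ℝ) := by
    rw [B_coe m ℓ (L m) 0 (by omega) hr0, WithBot.coe_inj]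
    exact Finset.sup'_congr _ (blk_top m) (fun t _ => rfl)
  rw [hB] at hinv
  have : (theNet m hm α β ε).post (fun _ => x) (L m) ⟨0, h0w⟩
      = (theNet m hm α β ε).post (fun _ => x) (L m) ⟨2*0, h2r0⟩ := rfl
  erw [this]
  exact_mod_cast hinv

lemma sum_abs_ite {N : ℕ} (K : ℕ) (hK : K < N) (e : ℝ) :
    ∑ c : Fin N, |if (c:ℕ) = K then e else 0| = |e| := by
  rw [Finset.sum_eq_single (⟨K, hK⟩ : Fin N)]
  · simp
  · intro b _ hb
    rw [if_neg (fun hc => hb (Fin.ext hc)), abs_zero]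
  · intro h; exact absurd (Finset.mem_univ _) h

lemma theNet_assumption1 (m : ℕ) (hm : 2 ≤ m)
    (hne : (Finset.univ : Finset (Fin m)).Nonempty)
    (α β : Fin m → ℝ) (ε : ℝ) (hα : ∀ t, |α t| ≤ 1) (hεabs : |ε| = 1) :
    (theNet m hm α β ε).Assumption1 := by
  have hL1 := L_pos m hm
  have hdepth : (theNet m hm α β ε).depth = L m + 1 := rfl
  refine ⟨?_, ?_, ?_⟩
  · intro r
    show ∑ j : Fin (w m 0), (Vdef m α ε 0 r j)^2 ≤ 1
    rw [sum_fin_one (w0 m) (fun j => (Vdef m α ε 0 r j)^2)]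
    show (aN m α (r:ℕ))^2 ≤ 1
    rw [aN, dif_pos (show min (r:ℕ) (m-1) < m by omega)]
    have := hα ⟨min (r:ℕ) (m-1), by omega⟩
    have h2 := abs_le.1 this
    nlinarith [h2.1, h2.2]
  · intro i h1 hlt r
    rw [hdepth] at hlt
    show ∑ j : Fin (w m i), |Vdef m α ε i r j| ≤ 1
    rcases eq_or_lt_of_le (show i ≤ L m by omega) with hiL | hiL
    · have hwL : w m i = 2 * n m i := w_eq m i h1 (by omega)
      have h0w : (0:ℕ) < w m i := by have := n_pos m i; omega
      rw [show (fun j : Fin (w m i) => |Vdef m α ε i r j|)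
          = fun j : Fin (w m i) => |if (j:ℕ) = 0 then ε else 0| from
        funext fun j => by
          simp only [Vdef]
          rw [if_neg (show ¬ i = 0 by omega), if_pos hiL]]
      rw [sum_abs_ite 0 h0w ε, hεabs]
    · have hwi : w m i = 2 * n m i := w_eq m i h1 (by omega)
      have hK : 2 * min (r:ℕ) (n m i - 1) < w m i := by have := n_pos m i; omega
      rw [show (fun j : Fin (w m i) => |Vdef m α ε i r j|)
          = fun j : Fin (w m i) =>
            |if (j:ℕ) = 2 * min (r:ℕ) (n m i - 1) then (1:ℝ) else 0| from
        funext fun j => by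
          simp only [Vdef]
          rw [if_neg (show ¬ i = 0 by omega), if_neg (show ¬ i = L m by omega)]]
      rw [sum_abs_ite _ hK 1]
      norm_num
  · refine ⟨max 0 (Finset.univ.sup' hne (fun t => |β t|)), le_max_left _ _, ?_⟩
    intro i _ r
    show |cdef m β i r| ≤ _
    simp only [cdef]
    by_cases hi : i = 0
    · rw [if_pos hi, aN, dif_pos (show min (r:ℕ) (m-1) < m by omega)]
      exact le_trans (Finset.le_sup' (fun t => |β t|) (Finset.mem_univ _)) (le_max_right _ _)
    · rw [if_neg hi, abs_zero]
      exact le_max_left _ _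

/-- total size as a function of m -/
def S (m : ℕ) : ℕ := ∑ i ∈ Finset.Icc 1 (Nat.clog 2 m), 2 * ((m-1)/2^i + 1)

lemma S_eq_range (m : ℕ) : S m = ∑ j ∈ Finset.range (Nat.clog 2 m), 2 * ((m-1)/2^(1+j) + 1) := by
  rw [S, ← Finset.Ico_add_one_right_eq_Icc, Finset.sum_Ico_eq_sum_range, Nat.add_sub_cancel]

lemma S_rec (m : ℕ) (hm : 2 ≤ m) : S m = S ((m+1)/2) + 2*((m+1)/2) := by
  set m' := (m+1)/2 with hm'
  have hclog : Nat.clog 2 m = Nat.clog 2 m' + 1 := by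
    rw [Nat.clog_of_two_le (by norm_num) hm]
    congr 2 <;> omega
  have hdiv : ∀ j : ℕ, (m-1)/2^(j+1) = (m'-1)/2^j := by
    intro j
    have h1 : (m-1)/2 = m' - 1 := by omega
    have h2 : (2:ℕ)^(j+1) = 2 * 2^j := by rw [pow_succ']
    rw [h2, ← Nat.div_div_eq_div_mul, h1]
  rw [S_eq_range, S_eq_range, hclog, Finset.sum_range_succ']
  congr 1
  · apply Finset.sum_congr rfl
    intro j _
    congr 2
    rw [show 1 + (j+1) = (1+j)+1 from by ring, hdiv (1+j)]
  · have : (m-1)/2^(1+0) = m' - 1 := by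
      rw [show 1+0 = 0+1 from rfl, hdiv 0]
      simp
    rw [this]
    omega

lemma S_le (m : ℕ) (hm : 2 ≤ m) : S m ≤ 3*m - 3 := by
  induction m using Nat.strong_induction_on with
  | _ m ih =>
    by_cases hm4 : m ≤ 4
    · interval_cases m
      · have h : S 2 = 2 := by
          rw [S, show Nat.clog 2 2 = 1 from by norm_num [Nat.clog]]; decide
        omega
      · have h : S 3 = 6 := by
          rw [S, show Nat.clog 2 3 = 2 from by norm_num [Nat.clog]]; decide
        omega
      · have h : S 4 = 6 := by
          rw [S, show Nat.clog 2 4 = 2 from by norm_num [Nat.clog]]; decide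
        omega
    · have hm5 : 5 ≤ m := by omega
      have hm' : 2 ≤ (m+1)/2 := by omega
      have hlt : (m+1)/2 < m := by omega
      have := ih ((m+1)/2) hlt hm'
      rw [S_rec m hm]
      omega

lemma theNet_size (m : ℕ) (hm : 2 ≤ m) (α β : Fin m → ℝ) (ε : ℝ) :
    (theNet m hm α β ε).size ≤ 3 * m - 1 := by
  have hsize : (theNet m hm α β ε).size = ∑ i ∈ Finset.Icc 1 (L m), w m i := rfl
  have : ∑ i ∈ Finset.Icc 1 (L m), w m i = S m := by
    rw [S]
    apply Finset.sum_congr rfl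
    intro i hi
    rw [Finset.mem_Icc] at hi
    rw [w_eq m i hi.1 hi.2]
    rfl
  rw [hsize, this]
  have := S_le m hm
  omega

end PWLNet

/-- Any `1`-Lipschitz `m`-piecewise linear convex (or concave) function `f : ℝ → ℝ` is
exactly represented by a GroupSort network of grouping size `2` satisfying Assumption 1,
with depth `⌈log₂ m⌉ + 1` and size at most `3m - 1`. -/

theorem groupSortNet_represents_pwl_real_convex (f : ℝ → ℝ) (hlip : LipschitzWith 1 f)
    (m : ℕ) (hm : 2 ≤ m) (hf : IsPWLReal f m)
    (hconv : ConvexOn ℝ Set.univ f ∨ ConcaveOn ℝ Set.univ f) :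
    ∃ N : GroupSortNet 2 1, N.Assumption1 ∧ (∀ x : ℝ, N.eval (fun _ => x) = f x) ∧
      N.depth = Nat.clog 2 m + 1 ∧
      N.size ≤ 3 * m - 1 := by
  have hne : (Finset.univ : Finset (Fin m)).Nonempty :=
    ⟨⟨0, by omega⟩, Finset.mem_univ _⟩
  rcases hconv with hcv | hcc
  · obtain ⟨α, β, hα, hrepr⟩ := repr_convex f hlip m hm hne hf hcv
    refine ⟨PWLNet.theNet m hm α β 1,
      PWLNet.theNet_assumption1 m hm hne α β 1 hα (by norm_num), ?_, rfl,
      PWLNet.theNet_size m hm α β 1⟩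
    intro x
    rw [PWLNet.theNet_eval m hm hne α β 1 x, one_mul, ← hrepr x]
  · -- concave case : apply the construction to -f
    have hlipg : LipschitzWith 1 (-f) := hlip.neg
    have hcvg : ConvexOn ℝ Set.univ (-f) := hcc.neg
    have hfg : IsPWLReal (-f) m := by
      obtain ⟨I, a, b, hcont, hord, hdisj, hcover, heq⟩ := hf
      refine ⟨I, fun i => -(a i), fun i => -(b i), hcont.neg, hord, hdisj, hcover, ?_⟩
      intro i x hx
      simp only [Pi.neg_apply]
      rw [heq i x hx]
      ring
    obtain ⟨α, β, hα, hrepr⟩ := repr_convex (-f) hlipg m hm hne hfg hcvg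
    refine ⟨PWLNet.theNet m hm α β (-1),
      PWLNet.theNet_assumption1 m hm hne α β (-1) hα (by norm_num), ?_, rfl,
      PWLNet.theNet_size m hm α β (-1)⟩
    intro x
    rw [PWLNet.theNet_eval m hm hne α β (-1) x, ← hrepr x]
    simp
end

section
/- Let f : ℝ → ℝ be 1-Lipschitz, m_f-piecewise linear, convex (or concave), with m_f = 2^n for some n ≥ 1. Then there exists a GroupSort neural network of grouping size 2 satisfying Assumption 1 that represents f exactly, with depth log₂(m_f) + 1 and size at most 2m_f − 1. -/
open Matrix

section AuxGS

open Finset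

private lemma sort_two (g : Fin 2 → ℝ) :
    (g ∘ Tuple.sort g) 0 = min (g 0) (g 1) ∧ (g ∘ Tuple.sort g) 1 = max (g 0) (g 1) := by
  have hmono : (g ∘ Tuple.sort g) 0 ≤ (g ∘ Tuple.sort g) 1 :=
    Tuple.monotone_sort g (by decide : (0 : Fin 2) ≤ 1)
  have h2 : ∀ x : Fin 2, x = 0 ∨ x = 1 := by decide
  rcases h2 (Tuple.sort g 0) with h0 | h0
  · have h1 : Tuple.sort g 1 = 1 := by
      rcases h2 (Tuple.sort g 1) with h | h
      · exact absurd ((Tuple.sort g).injective (h0.trans h.symm)) (by decide)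
      · exact h
    simp only [Function.comp_apply, h0, h1] at hmono ⊢
    rw [min_eq_left hmono, max_eq_right hmono]
    exact ⟨rfl, rfl⟩
  · have h1 : Tuple.sort g 1 = 0 := by
      rcases h2 (Tuple.sort g 1) with h | h
      · exact h
      · exact absurd ((Tuple.sort g).injective (h0.trans h.symm)) (by decide)
    simp only [Function.comp_apply, h0, h1] at hmono ⊢
    rw [min_eq_right hmono, max_eq_left hmono]
    exact ⟨rfl, rfl⟩

private lemma groupSortFun_two {ν : ℕ} (y : Fin ν → ℝ) (i : Fin ν)
    (h0 : (i : ℕ) / 2 * 2 < ν) (h1 : (i : ℕ) / 2 * 2 + 1 < ν) :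
    groupSortFun 2 y i =
      if (i : ℕ) % 2 = 0 then max (y ⟨(i : ℕ) / 2 * 2, h0⟩) (y ⟨(i : ℕ) / 2 * 2 + 1, h1⟩)
      else min (y ⟨(i : ℕ) / 2 * 2, h0⟩) (y ⟨(i : ℕ) / 2 * 2 + 1, h1⟩) := by
  have hgrp : (fun j : Fin 2 =>
      if h : (i : ℕ) / 2 * 2 + (j : ℕ) < ν then y ⟨(i : ℕ) / 2 * 2 + (j : ℕ), h⟩ else 0)
      = fun j : Fin 2 => y ⟨(i : ℕ) / 2 * 2 + (j : ℕ), by omega⟩ := by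
    funext j
    rw [dif_pos]
  have hG : ∀ j : Fin 2, (fun j : Fin 2 => y ⟨(i : ℕ) / 2 * 2 + (j : ℕ), by omega⟩) j
      = y ⟨(i : ℕ) / 2 * 2 + (j : ℕ), by omega⟩ := fun _ => rfl
  unfold groupSortFun
  rw [dif_pos (by norm_num : (0:ℕ) < 2)]
  simp only []
  rw [hgrp]
  set G : Fin 2 → ℝ := fun j : Fin 2 => y ⟨(i : ℕ) / 2 * 2 + (j : ℕ), by omega⟩ with hGdef
  obtain ⟨hmin, hmax⟩ := sort_two G
  have hG0 : G 0 = y ⟨(i : ℕ) / 2 * 2, h0⟩ := by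
    rw [hGdef]; congr 1 <;> simp
  have hG1 : G 1 = y ⟨(i : ℕ) / 2 * 2 + 1, h1⟩ := by
    rw [hGdef]; congr 1 <;> simp
  have hcase : (i : ℕ) % 2 = 0 ∨ (i : ℕ) % 2 = 1 := by omega
  rcases hcase with h | h
  · have hidx : (⟨2 - 1 - (i : ℕ) % 2, by omega⟩ : Fin 2) = 1 := Fin.ext (by simp [h])
    rw [hidx, hmax, hG0, hG1, if_pos h]
  · have hidx : (⟨2 - 1 - (i : ℕ) % 2, by omega⟩ : Fin 2) = 0 := Fin.ext (by simp [h])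
    rw [hidx, hmin, hG0, hG1, if_neg (by omega)]

end AuxGS
section AuxNet

/-- Binary-tree max of `L` over the block `[2^s * r, 2^s * (r+1))`. -/
noncomputable def blockMax (L : ℕ → ℝ) : ℕ → ℕ → ℝ
  | 0, r => L r
  | s + 1, r => max (blockMax L s (2 * r)) (blockMax L s (2 * r + 1))

private lemma le_blockMax (L : ℕ → ℝ) : ∀ s r t, t < 2 ^ s → L (2 ^ s * r + t) ≤ blockMax L s r := by
  intro s
  induction s with
  | zero =>
    intro r t ht
    interval_cases t
    simp [blockMax]
  | succ s ih =>
    intro r t ht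
    by_cases h : t < 2 ^ s
    · have h2 := ih (2 * r) t h
      have e : 2 ^ s * (2 * r) + t = 2 ^ (s + 1) * r + t := by ring_nf
      rw [e] at h2
      exact h2.trans (le_max_left _ _)
    · have hts : 2 ^ s ≤ t := le_of_not_gt h
      have ht2 : t - 2 ^ s < 2 ^ s := by
        have : 2 ^ (s + 1) = 2 ^ s * 2 := pow_succ 2 s
        omega
      have h2 := ih (2 * r + 1) (t - 2 ^ s) ht2
      have e : 2 ^ s * (2 * r + 1) + (t - 2 ^ s) = 2 ^ (s + 1) * r + t := by
        have e1 : 2 ^ s * (2 * r + 1) = 2 ^ (s + 1) * r + 2 ^ s := by ring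
        omega
      rw [e] at h2
      exact h2.trans (le_max_right _ _)

private lemma blockMax_le (L : ℕ → ℝ) :
    ∀ s r z, (∀ t, t < 2 ^ s → L (2 ^ s * r + t) ≤ z) → blockMax L s r ≤ z := by
  intro s
  induction s with
  | zero =>
    intro r z hz
    have := hz 0 (by norm_num)
    simpa [blockMax] using this
  | succ s ih =>
    intro r z hz
    refine max_le (ih _ _ fun t ht => ?_) (ih _ _ fun t ht => ?_)
    · have e : 2 ^ s * (2 * r) + t = 2 ^ (s + 1) * r + t := by ring_nf
      rw [e]
      exact hz t (by have : 2 ^ (s + 1) = 2 ^ s * 2 := pow_succ 2 s; omega)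
    · have e : 2 ^ s * (2 * r + 1) + t = 2 ^ (s + 1) * r + (2 ^ s + t) := by
        have e1 : 2 ^ s * (2 * r + 1) = 2 ^ (s + 1) * r + 2 ^ s := by ring
        omega
      rw [e]
      exact hz (2 ^ s + t) (by have : 2 ^ (s + 1) = 2 ^ s * 2 := pow_succ 2 s; omega)

private lemma blockMax_mem (L : ℕ → ℝ) :
    ∀ s r, ∃ t, t < 2 ^ s ∧ blockMax L s r = L (2 ^ s * r + t) := by
  intro s
  induction s with
  | zero =>
    intro r
    exact ⟨0, by norm_num, by simp [blockMax]⟩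
  | succ s ih =>
    intro r
    rcases max_choice (blockMax L s (2 * r)) (blockMax L s (2 * r + 1)) with h | h
    · obtain ⟨t, ht, he⟩ := ih (2 * r)
      refine ⟨t, by have : 2 ^ (s + 1) = 2 ^ s * 2 := pow_succ 2 s; omega, ?_⟩
      rw [show blockMax L (s+1) r = max (blockMax L s (2*r)) (blockMax L s (2*r+1)) from rfl,
        h, he]
      congr 1
      ring_nf
    · obtain ⟨t, ht, he⟩ := ih (2 * r + 1)
      refine ⟨2 ^ s + t, by have : 2 ^ (s + 1) = 2 ^ s * 2 := pow_succ 2 s; omega, ?_⟩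
      rw [show blockMax L (s+1) r = max (blockMax L s (2*r)) (blockMax L s (2*r+1)) from rfl,
        h, he]
      congr 1
      have e1 : 2 ^ s * (2 * r + 1) = 2 ^ (s + 1) * r + 2 ^ s := by ring
      omega

def myWidth (n : ℕ) : ℕ → ℕ := fun i => if i = 0 then 1 else if i ≤ n then 2 ^ (n + 1 - i) else 1

private lemma myWidth_zero (n : ℕ) : myWidth n 0 = 1 := rfl

private lemma myWidth_mid (n i : ℕ) (h1 : 1 ≤ i) (h2 : i ≤ n) :
    myWidth n i = 2 ^ (n + 1 - i) := by
  simp only [myWidth]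
  rw [if_neg (by omega), if_pos h2]

/-- The network computing `x ↦ ε * max_{t < 2^n} (A t * x + B t)` by a binary tree of
pairwise maxima. -/
noncomputable def myNet (n : ℕ) (ε : ℝ) (A B : ℕ → ℝ) : GroupSortNet 2 1 where
  depth := n + 1
  depth_pos := by omega
  width := myWidth n
  width_in := rfl
  width_out := by simp only [myWidth]; rw [if_neg (by omega), if_neg (by omega)]
  width_div := by
    intro i h1 h2
    simp only [myWidth]
    rw [if_neg (by omega), if_pos (by omega)]
    exact dvd_pow_self 2 (by omega)
  V := fun i r j =>
    if i = 0 then A r.val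
    else if i < n then (if (j : ℕ) = 2 * (r : ℕ) then 1 else 0)
    else (if (j : ℕ) = 0 then ε else 0)
  c := fun i r => if i = 0 then B r.val else 0

private lemma sum_ite_val {ν : ℕ} (c : ℕ) (hc : c < ν) (u : Fin ν → ℝ) (e : ℝ) :
    (∑ j : Fin ν, (if (j : ℕ) = c then e else 0) * u j) = e * u ⟨c, hc⟩ := by
  rw [Finset.sum_eq_single (⟨c, hc⟩ : Fin ν)]
  · simp
  · intro j _ hj
    rw [if_neg (fun h => hj (Fin.ext h)), zero_mul]
  · intro h
    exact absurd (Finset.mem_univ _) h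

end AuxNet
section AuxEval

private lemma myNet_post (n : ℕ) (hn : 1 ≤ n) (ε : ℝ) (A B : ℕ → ℝ) (x : ℝ) :
    ∀ i, 1 ≤ i → i ≤ n → ∀ j : Fin (myWidth n i), (j : ℕ) % 2 = 0 →
      (myNet n ε A B).post (fun _ => x) i j
        = blockMax (fun t => A t * x + B t) i ((j : ℕ) / 2) := by
  set L : ℕ → ℝ := fun t => A t * x + B t with hL
  intro i
  induction i with
  | zero => omega
  | succ i ih =>
    intro _ h2 j hj
    -- the pre-activation vector of layer i+1 equals `blockMax L i ·`
    have hwid : myWidth n (i + 1) = 2 ^ (n + 1 - (i + 1)) := myWidth_mid n (i + 1) (by omega) h2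
    have hy : ∀ r : Fin ((myNet n ε A B).width (i + 1)),
        ((myNet n ε A B).V i *ᵥ (myNet n ε A B).post (fun _ => x) i
          + (myNet n ε A B).c i) r = blockMax L i (r : ℕ) := by
      intro r
      by_cases hi : i = 0
      · subst hi
        have hV0 : ∀ j' : Fin ((myNet n ε A B).width 0), (myNet n ε A B).V 0 r j' = A (r : ℕ) := by
          intro j'
          simp [myNet]
        have hc0 : (myNet n ε A B).c 0 r = B (r : ℕ) := by simp [myNet]
        simp only [Pi.add_apply, Matrix.mulVec, dotProduct]
        rw [Finset.sum_congr rfl (fun j' _ => by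
          rw [hV0 j', show (myNet n ε A B).post (fun _ => x) 0 j' = x from rfl])]
        rw [Finset.sum_const, Finset.card_univ, Fintype.card_fin, hc0]
        rw [show (myNet n ε A B).width 0 = 1 from rfl, one_smul]
        rw [show blockMax L 0 (r : ℕ) = L (r : ℕ) from rfl]
      · -- 1 ≤ i < n
        have hin : i < n := by omega
        have hc2 : 2 * (r : ℕ) < (myNet n ε A B).width i := by
          have h1 : (myNet n ε A B).width i = 2 ^ (n + 1 - i) := myWidth_mid n i (by omega) (by omega)
          have h3 : (r : ℕ) < 2 ^ (n + 1 - (i + 1)) := hwid ▸ r.isLt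
          have h4 : 2 ^ (n + 1 - i) = 2 ^ (n + 1 - (i + 1)) * 2 := by
            rw [← pow_succ]
            congr 1
            omega
          omega
        have hV : ∀ j' : Fin ((myNet n ε A B).width i), (myNet n ε A B).V i r j'
            = (if (j' : ℕ) = 2 * (r : ℕ) then (1 : ℝ) else 0) := by
          intro j'
          simp only [myNet]
          rw [if_neg hi, if_pos hin]
        simp only [Pi.add_apply, Matrix.mulVec, dotProduct]
        rw [Finset.sum_congr rfl (fun j' _ => by rw [hV j'])]
        rw [sum_ite_val (2 * (r : ℕ)) hc2, one_mul]
        have hcz : (myNet n ε A B).c i r = 0 := by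
          simp only [myNet]
          rw [if_neg hi]
        rw [hcz, add_zero]
        have := ih (by omega) (by omega) ⟨2 * (r : ℕ), hc2⟩ (by simp [Nat.mul_mod_right])
        erw [this]
        congr 1
        show 2 * (r : ℕ) / 2 = (r : ℕ)
        omega
    -- now unfold the groupSort layer
    have hdvd : 2 ∣ myWidth n (i + 1) := by
      rw [hwid]
      exact dvd_pow_self 2 (by omega)
    have h0 : (j : ℕ) / 2 * 2 < myWidth n (i + 1) := by
      have := j.isLt
      omega
    have h1 : (j : ℕ) / 2 * 2 + 1 < myWidth n (i + 1) := by
      have := j.isLt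
      omega
    rw [show (myNet n ε A B).post (fun _ => x) (i + 1)
        = groupSortFun 2 ((myNet n ε A B).V i *ᵥ (myNet n ε A B).post (fun _ => x) i
          + (myNet n ε A B).c i) from rfl]
    rw [groupSortFun_two (ν := (myNet n ε A B).width (i + 1)) _ j h0 h1, if_pos hj, hy, hy]
    have e0 : ((⟨(j : ℕ) / 2 * 2, h0⟩ : Fin ((myNet n ε A B).width (i + 1))) : ℕ) = 2 * ((j : ℕ) / 2) := by
      show (j : ℕ) / 2 * 2 = 2 * ((j : ℕ) / 2)
      omega
    have e1 : ((⟨(j : ℕ) / 2 * 2 + 1, h1⟩ : Fin ((myNet n ε A B).width (i + 1))) : ℕ)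
        = 2 * ((j : ℕ) / 2) + 1 := by
      show (j : ℕ) / 2 * 2 + 1 = 2 * ((j : ℕ) / 2) + 1
      omega
    rw [e0, e1]
    rfl

private lemma myNet_eval (n : ℕ) (hn : 1 ≤ n) (ε : ℝ) (A B : ℕ → ℝ) (x : ℝ) :
    (myNet n ε A B).eval (fun _ => x) = ε * blockMax (fun t => A t * x + B t) n 0 := by
  have hwn : (myNet n ε A B).width ((myNet n ε A B).depth - 1) = 2 := by
    show myWidth n n = 2
    rw [myWidth_mid n n hn le_rfl]
    norm_num
  have h02 : 0 < (myNet n ε A B).width ((myNet n ε A B).depth - 1) := by omega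
  have hpf : 0 < (myNet n ε A B).width ((myNet n ε A B).depth - 1 + 1) := by
    have h : (myNet n ε A B).depth - 1 + 1 = (myNet n ε A B).depth := rfl
    rw [h, (myNet n ε A B).width_out]
    omega
  unfold GroupSortNet.eval
  simp only [Pi.add_apply, Matrix.mulVec, dotProduct]
  have hV : ∀ j' : Fin ((myNet n ε A B).width ((myNet n ε A B).depth - 1)),
      (myNet n ε A B).V ((myNet n ε A B).depth - 1) ⟨0, hpf⟩ j'
        = (if (j' : ℕ) = 0 then ε else 0) := by
    intro j'
    show (if n = 0 then A ((0 : ℕ)) else if n < n then _ else (if (j' : ℕ) = 0 then ε else 0)) = _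
    rw [if_neg (by omega), if_neg (by omega)]
  rw [Finset.sum_congr rfl (fun j' _ => by rw [hV j'])]
  rw [sum_ite_val 0 h02]
  have hcz : (myNet n ε A B).c ((myNet n ε A B).depth - 1) ⟨0, hpf⟩ = 0 := by
    show (if n = 0 then B ((0 : ℕ)) else 0) = 0
    rw [if_neg (by omega)]
  rw [hcz, add_zero]
  show ε * (myNet n ε A B).post (fun _ => x) n ⟨0, h02⟩
      = ε * blockMax (fun t => A t * x + B t) n 0
  erw [myNet_post n hn ε A B x n hn le_rfl ⟨0, h02⟩ (show (0 : ℕ) % 2 = 0 from rfl)]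
  congr 2
  show (0 : ℕ) / 2 = 0
  omega

end AuxEval
section AuxAssump

private lemma sum_abs_ite_le {ν : ℕ} (c : ℕ) (e : ℝ) (he : |e| ≤ 1) :
    (∑ j : Fin ν, |if (j : ℕ) = c then e else 0|) ≤ 1 := by
  have hcg : ∀ j : Fin ν, |if (j : ℕ) = c then e else 0| = if (j : ℕ) = c then |e| else 0 := by
    intro j
    split <;> simp
  rw [Finset.sum_congr rfl (fun j _ => hcg j)]
  by_cases hc : c < ν
  · rw [Finset.sum_eq_single (⟨c, hc⟩ : Fin ν)]
    · simpa using he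
    · intro j _ hj
      exact if_neg (fun h => hj (Fin.ext h))
    · intro h
      exact absurd (Finset.mem_univ _) h
  · rw [Finset.sum_eq_zero]
    · norm_num
    · intro j _
      exact if_neg (by omega)

private lemma myNet_assumption1 (n : ℕ) (hn : 1 ≤ n) (ε : ℝ) (hε : |ε| ≤ 1) (A B : ℕ → ℝ)
    (hA : ∀ t, |A t| ≤ 1) (K : ℝ) (hK : 0 ≤ K) (hB : ∀ t, |B t| ≤ K) :
    (myNet n ε A B).Assumption1 := by
  refine ⟨?_, ?_, K, hK, ?_⟩
  · intro r
    have hV0 : ∀ j : Fin ((myNet n ε A B).width 0),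
        (myNet n ε A B).V 0 r j = A (r : ℕ) := fun j => by simp [myNet]
    rw [Finset.sum_congr rfl (fun j _ => by rw [hV0 j])]
    rw [Finset.sum_const, Finset.card_univ, Fintype.card_fin,
      show (myNet n ε A B).width 0 = 1 from rfl, one_smul]
    rw [sq_abs (A (r : ℕ)) |>.symm]
    have := hA (r : ℕ)
    nlinarith [abs_nonneg (A (r : ℕ))]
  · intro i hi1 hi2 r
    by_cases hin : i < n
    · have hV : ∀ j : Fin ((myNet n ε A B).width i),
          (myNet n ε A B).V i r j = (if (j : ℕ) = 2 * (r : ℕ) then (1 : ℝ) else 0) := by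
        intro j
        simp only [myNet]
        rw [if_neg (by omega), if_pos hin]
      rw [Finset.sum_congr rfl (fun j _ => by rw [hV j])]
      exact sum_abs_ite_le _ _ (by norm_num)
    · have hV : ∀ j : Fin ((myNet n ε A B).width i),
          (myNet n ε A B).V i r j = (if (j : ℕ) = 0 then ε else 0) := by
        intro j
        simp only [myNet]
        rw [if_neg (by omega), if_neg hin]
      rw [Finset.sum_congr rfl (fun j _ => by rw [hV j])]
      exact sum_abs_ite_le _ _ hε
  · intro i _ r
    show |if i = 0 then B (r : ℕ) else 0| ≤ K
    split
    · exact hB _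
    · simpa using hK

private lemma sum_pow_Icc : ∀ n : ℕ, (∑ i ∈ Finset.Icc 1 n, 2 ^ i) = 2 ^ (n + 1) - 2 := by
  intro n
  induction n with
  | zero => simp
  | succ n ih =>
    rw [Finset.sum_Icc_succ_top (by omega : 1 ≤ n + 1), ih]
    have h1 : 2 ^ (n + 2) = 2 ^ (n + 1) * 2 := pow_succ 2 (n + 1)
    have h2 : 1 ≤ 2 ^ (n + 1) := Nat.one_le_two_pow
    omega

private lemma myNet_size (n : ℕ) (hn : 1 ≤ n) (ε : ℝ) (A B : ℕ → ℝ) :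
    (myNet n ε A B).size ≤ 2 * 2 ^ n - 1 := by
  unfold GroupSortNet.size
  have hd : (myNet n ε A B).depth - 1 = n := rfl
  rw [hd]
  have h1 : (∑ i ∈ Finset.Icc 1 n, (myNet n ε A B).width i)
      = ∑ i ∈ Finset.Icc 1 n, 2 ^ (n + 1 - i) := by
    refine Finset.sum_congr rfl fun i hi => ?_
    rw [Finset.mem_Icc] at hi
    exact myWidth_mid n i hi.1 hi.2
  rw [h1]
  have h2 : (∑ i ∈ Finset.Icc 1 n, 2 ^ (n + 1 - i)) = ∑ i ∈ Finset.Icc 1 n, 2 ^ i := by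
    refine Finset.sum_nbij' (fun i => n + 1 - i) (fun i => n + 1 - i) ?_ ?_ ?_ ?_ ?_
    · intro a ha
      rw [Finset.mem_Icc] at ha
      show n + 1 - a ∈ Finset.Icc 1 n
      rw [Finset.mem_Icc]
      omega
    · intro a ha
      rw [Finset.mem_Icc] at ha
      show n + 1 - a ∈ Finset.Icc 1 n
      rw [Finset.mem_Icc]
      omega
    · intro a ha
      rw [Finset.mem_Icc] at ha
      show n + 1 - (n + 1 - a) = a
      omega
    · intro a ha
      rw [Finset.mem_Icc] at ha
      show n + 1 - (n + 1 - a) = a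
      omega
    · intro a ha
      rfl
  rw [h2, sum_pow_Icc n]
  have h3 : 2 ^ (n + 1) = 2 ^ n * 2 := pow_succ 2 n
  have h4 : 1 ≤ 2 ^ n := Nat.one_le_two_pow
  omega

end AuxAssump
section AuxRep

private lemma rep_convex (f : ℝ → ℝ) (hlip : LipschitzWith 1 f) (m : ℕ) (hm : 0 < m)
    (hf : IsPWLReal f m) (hconv : ConvexOn ℝ Set.univ f) :
    ∃ a b : Fin m → ℝ, (∀ i, |a i| ≤ 1) ∧ (∀ x (i : Fin m), a i * x + b i ≤ f x) ∧
      (∀ x, ∃ i, f x = a i * x + b i) := by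
  classical
  obtain ⟨I, a, b, hcont, hord, hdisj, hcover, heq⟩ := hf
  -- a piece with two points exists
  have hex : ∃ i₀ : Fin m, (I i₀).Nontrivial := by
    by_contra h
    push_neg at h
    have hfin : ∀ i, (I i).Finite := fun i =>
      Set.Subsingleton.finite (h i)
    have : (Set.univ : Set ℝ).Finite := by
      rw [← hcover]
      exact Set.finite_iUnion hfin
    exact Set.infinite_univ this
  obtain ⟨i₀, hi₀⟩ := hex
  -- slopes of nontrivial pieces are at most 1 in absolute value
  have hslope : ∀ i : Fin m, (I i).Nontrivial → |a i| ≤ 1 := by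
    rintro i ⟨u, hu, v, hv, huv⟩
    have h1 : f u = a i * u + b i := heq i u hu
    have h2 : f v = a i * v + b i := heq i v hv
    have h3 : |f u - f v| ≤ |u - v| := by
      have := hlip.dist_le_mul u v
      rwa [Real.dist_eq, Real.dist_eq, NNReal.coe_one, one_mul] at this
    have h4 : |a i| * |u - v| ≤ |u - v| := by
      rw [← abs_mul]
      calc |a i * (u - v)| = |f u - f v| := by rw [h1, h2]; ring_nf
        _ ≤ |u - v| := h3
    have h5 : 0 < |u - v| := abs_pos.mpr (sub_ne_zero.mpr huv)
    nlinarith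
  -- affine pieces with two points are global minorants (by convexity)
  have hkey : ∀ i : Fin m, ∀ u v : ℝ, u ∈ I i → v ∈ I i → u < v →
      ∀ x, a i * x + b i ≤ f x := by
    intro i u v hu hv huv x
    have hfu : f u = a i * u + b i := heq i u hu
    have hfv : f v = a i * v + b i := heq i v hv
    rcases lt_trichotomy x u with hx | hx | hx
    · have hs := hconv.slope_mono_adjacent (Set.mem_univ x) (Set.mem_univ v) hx (by linarith)
      have hr : (f v - f u) / (v - u) = a i := by
        rw [hfu, hfv, div_eq_iff (sub_ne_zero.mpr huv.ne')]
        ring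
      rw [hr] at hs
      rw [div_le_iff₀ (by linarith : (0:ℝ) < u - x)] at hs
      have he : a i * (u - x) = a i * u - a i * x := by ring
      rw [he, hfu] at hs
      linarith
    · rw [← hx] at hfu
      linarith [hfu]
    · rcases le_or_gt x v with hxv | hxv
      · have hxm : x ∈ I i := (hord i).out hu hv ⟨le_of_lt hx, hxv⟩
        rw [heq i x hxm]
      · have hs := hconv.slope_mono_adjacent (Set.mem_univ u) (Set.mem_univ x) huv hxv
        have hr : (f v - f u) / (v - u) = a i := by
          rw [hfu, hfv, div_eq_iff (sub_ne_zero.mpr huv.ne')]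
          ring
        rw [hr] at hs
        rw [le_div_iff₀ (by linarith : (0:ℝ) < x - v)] at hs
        have he : a i * (x - v) = a i * x - a i * v := by ring
        rw [he, hfv] at hs
        linarith
  have hmin : ∀ i : Fin m, (I i).Nontrivial → ∀ x, a i * x + b i ≤ f x := by
    rintro i ⟨u, hu, v, hv, huv⟩ x
    rcases lt_or_gt_of_ne huv with h | h
    · exact hkey i u v hu hv h x
    · exact hkey i v u hv hu h x
  refine ⟨fun i => if (I i).Nontrivial then a i else a i₀,
    fun i => if (I i).Nontrivial then b i else b i₀, ?_, ?_, ?_⟩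
  · intro i
    show |if (I i).Nontrivial then a i else a i₀| ≤ 1
    split_ifs with h
    · exact hslope i h
    · exact hslope i₀ hi₀
  · intro x i
    show (if (I i).Nontrivial then a i else a i₀) * x + (if (I i).Nontrivial then b i else b i₀) ≤ f x
    split_ifs with h
    · exact hmin i h x
    · exact hmin i₀ hi₀ x
  · intro x
    set J : Fin m → Set ℝ := fun i => if (I i).Nontrivial then I i else ∅ with hJ
    have hcompl : ((⋃ i, J i)ᶜ : Set ℝ).Countable := by
      have hsub : ((⋃ i, J i)ᶜ : Set ℝ)
          ⊆ ⋃ i, (if (I i).Nontrivial then (∅ : Set ℝ) else I i) := by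
        intro y hy
        have hyu : y ∈ ⋃ i, I i := by
          rw [hcover]
          trivial
        obtain ⟨i, hi⟩ := Set.mem_iUnion.mp hyu
        by_cases hnt : (I i).Nontrivial
        · exact absurd (Set.mem_iUnion.mpr ⟨i, by rw [hJ]; simpa [hnt] using hi⟩) hy
        · exact Set.mem_iUnion.mpr ⟨i, by simpa [hnt] using hi⟩
      refine Set.Countable.mono hsub (Set.countable_iUnion fun i => ?_)
      split_ifs with h
      · exact Set.countable_empty
      · exact ((Set.not_nontrivial_iff.mp h).finite).countable
    have hdense : Dense (⋃ i, J i) := by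
      have := Set.Countable.dense_compl ℝ hcompl
      rwa [compl_compl] at this
    have hx : x ∈ ⋃ i, closure (J i) := by
      rw [← closure_iUnion_of_finite]
      rw [hdense.closure_eq]
      trivial
    obtain ⟨i, hi⟩ := Set.mem_iUnion.mp hx
    have hnt : (I i).Nontrivial := by
      by_contra h
      rw [hJ] at hi
      simp only [if_neg h] at hi
      simp at hi
    have hJi : J i = I i := by rw [hJ]; simp [hnt]
    rw [hJi] at hi
    have hcl : Set.EqOn f (fun y => a i * y + b i) (closure (I i)) :=
      Set.EqOn.closure (fun y hy => heq i y hy) hcont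
        ((continuous_const.mul continuous_id).add continuous_const)
    refine ⟨i, ?_⟩
    show f x = (if (I i).Nontrivial then a i else a i₀) * x + (if (I i).Nontrivial then b i else b i₀)
    rw [if_pos hnt, if_pos hnt]
    exact hcl hi

end AuxRep
/-- Any `1`-Lipschitz `m`-piecewise linear convex (or concave) function `f : ℝ → ℝ` with
`m = 2^n` (`n ≥ 1`) is exactly represented by a GroupSort network of grouping size `2`
satisfying Assumption 1, with depth `log₂ m + 1 = n + 1` and size at most `2m - 1`. -/
theorem groupSortNet_represents_pwl_real_convex_pow_two (f : ℝ → ℝ)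
    (hlip : LipschitzWith 1 f) (n : ℕ) (hn : 1 ≤ n) (m : ℕ) (hm : m = 2 ^ n)
    (hf : IsPWLReal f m)
    (hconv : ConvexOn ℝ Set.univ f ∨ ConcaveOn ℝ Set.univ f) :
    ∃ N : GroupSortNet 2 1, N.Assumption1 ∧ (∀ x : ℝ, N.eval (fun _ => x) = f x) ∧
      N.depth = n + 1 ∧
      N.size ≤ 2 * m - 1 := by
  classical
  subst hm
  have hm1 : 0 < 2 ^ n := Nat.pow_pos (by omega)
  -- reduce to the convex case, recording a sign
  have hrep : ∃ (g : ℝ → ℝ) (ε : ℝ) (aa bb : Fin (2 ^ n) → ℝ),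
      |ε| ≤ 1 ∧ (∀ x, f x = ε * g x) ∧ (∀ i, |aa i| ≤ 1) ∧
      (∀ x (i : Fin (2 ^ n)), aa i * x + bb i ≤ g x) ∧
      (∀ x, ∃ i, g x = aa i * x + bb i) := by
    rcases hconv with hc | hc
    · obtain ⟨aa, bb, h1, h2, h3⟩ := rep_convex f hlip (2 ^ n) hm1 hf hc
      exact ⟨f, 1, aa, bb, by norm_num, fun x => (one_mul _).symm, h1, h2, h3⟩
    · have hlip' : LipschitzWith 1 (fun y => -f y) := by
        apply LipschitzWith.of_dist_le_mul
        intro x y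
        have := hlip.dist_le_mul x y
        rw [Real.dist_eq, Real.dist_eq] at this ⊢
        rw [NNReal.coe_one, one_mul] at this ⊢
        calc |-f x - -f y| = |f x - f y| := by rw [← abs_neg]; ring_nf
          _ ≤ |x - y| := this
      have hf' : IsPWLReal (fun y => -f y) (2 ^ n) := by
        obtain ⟨I, a, b, hcont, hord, hdisj, hcover, heq⟩ := hf
        exact ⟨I, fun i => -a i, fun i => -b i, hcont.neg, hord, hdisj, hcover,
          fun i x hx => by show -f x = -a i * x + -b i; rw [heq i x hx]; ring⟩
      have hc' : ConvexOn ℝ Set.univ (fun y => -f y) := neg_convexOn_iff.mpr hc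
      obtain ⟨aa, bb, h1, h2, h3⟩ := rep_convex _ hlip' (2 ^ n) hm1 hf' hc'
      refine ⟨fun y => -f y, -1, aa, bb, by norm_num, fun x => by ring, h1, h2, h3⟩
  obtain ⟨g, ε, aa, bb, hε, hfg, ha1, hlb, hattain⟩ := hrep
  set A : ℕ → ℝ := fun t => if h : t < 2 ^ n then aa ⟨t, h⟩ else 0 with hA
  set B : ℕ → ℝ := fun t => if h : t < 2 ^ n then bb ⟨t, h⟩ else 0 with hB
  have hAle : ∀ t, |A t| ≤ 1 := by
    intro t
    show |if h : t < 2 ^ n then aa ⟨t, h⟩ else 0| ≤ 1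
    split
    · exact ha1 _
    · norm_num
  have hBle : ∀ t, |B t| ≤ ∑ i : Fin (2 ^ n), |bb i| := by
    intro t
    show |if h : t < 2 ^ n then bb ⟨t, h⟩ else 0| ≤ ∑ i : Fin (2 ^ n), |bb i|
    split
    · exact Finset.single_le_sum (fun j _ => abs_nonneg (bb j)) (Finset.mem_univ _)
    · simpa using Finset.sum_nonneg (fun j _ => abs_nonneg (bb j))
  refine ⟨myNet n ε A B, myNet_assumption1 n hn ε hε A B hAle _
    (Finset.sum_nonneg (fun j _ => abs_nonneg (bb j))) hBle, ?_, rfl, myNet_size n hn ε A B⟩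
  intro x
  rw [myNet_eval n hn ε A B x, hfg x]
  congr 1
  set L : ℕ → ℝ := fun t => A t * x + B t with hL
  apply le_antisymm
  · obtain ⟨t, ht, hbe⟩ := blockMax_mem L n 0
    rw [hbe]
    have he : 2 ^ n * 0 + t = t := by omega
    rw [he]
    have hLt : L t = aa ⟨t, ht⟩ * x + bb ⟨t, ht⟩ := by
      show (if h : t < 2 ^ n then aa ⟨t, h⟩ else 0) * x
          + (if h : t < 2 ^ n then bb ⟨t, h⟩ else 0) = _
      rw [dif_pos ht, dif_pos ht]
    rw [hLt]
    exact hlb x ⟨t, ht⟩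
  · obtain ⟨i, hgi⟩ := hattain x
    rw [hgi]
    have h1 := le_blockMax L n 0 (i : ℕ) i.isLt
    have he : 2 ^ n * 0 + (i : ℕ) = (i : ℕ) := by omega
    rw [he] at h1
    have hLi : L (i : ℕ) = aa i * x + bb i := by
      show (if h : (i : ℕ) < 2 ^ n then aa ⟨(i : ℕ), h⟩ else 0) * x
          + (if h : (i : ℕ) < 2 ^ n then bb ⟨(i : ℕ), h⟩ else 0) = _
      rw [dif_pos i.isLt, dif_pos i.isLt]
    rw [hLi] at h1
    exact h1
end
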